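/- Let a1, a2, a3 be distinct real numbers and let P^(3)(M) be the cubic polynomial vector defined as in the k = 3 modified Euler–Poinsot system. If M(t) solves the Euler equations Ṁ = M × aM, then γ(t) := P^(3)(M(t)) solves the associated Poisson equations γ̇ = 3·γ × aM; that is, d/dt P^(3)(M(t)) = 3·P^(3)(M(t)) × aM(t). -/

import Mathlib

/-- Cross product in `ℝ³`. -/
def cross3 (v w : Fin 3 → ℝ) : Fin 3 → ℝ :=
  ![v 1 * w 2 - v 2 * w 1, v 2 * w 0 - v 0 * w 2, v 0 * w 1 - v 1 * w 0]

/-- Componentwise action of a diagonal matrix. -/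
def dmul3 (a v : Fin 3 → ℝ) : Fin 3 → ℝ := fun i => a i * v i

/-- The cubic polynomial vector P⁽³⁾(M) of the k = 3 modified Euler–Poinsot system. -/
def P3vec (a1 a2 a3 : ℝ) (M : Fin 3 → ℝ) : Fin 3 → ℝ :=
  ![M 0 * ((a1 * a2 + 8 * a1 ^ 2 - a3 * a2 + a3 * a1) * (M 0) ^ 2
        + (3 * a3 * a2 - 3 * a3 * a1 + 9 * a1 * a2) * (M 1) ^ 2
        + (9 * a3 * a1 - 3 * a1 * a2 + 3 * a3 * a2) * (M 2) ^ 2),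
    M 1 * ((-3 * a3 * a2 + 3 * a3 * a1 + 9 * a1 * a2) * (M 0) ^ 2
        + (a3 * a2 - a3 * a1 + 8 * a2 ^ 2 + a1 * a2) * (M 1) ^ 2
        + (3 * a3 * a1 - 3 * a1 * a2 + 9 * a3 * a2) * (M 2) ^ 2),
    M 2 * ((9 * a3 * a1 + 3 * a1 * a2 - 3 * a3 * a2) * (M 0) ^ 2
        + (-3 * a3 * a1 + 3 * a1 * a2 + 9 * a3 * a2) * (M 1) ^ 2
        + (a3 * a1 + 8 * a3 ^ 2 - a1 * a2 + a3 * a2) * (M 2) ^ 2)]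

lemma hasDerivAt_cubic3 (c1 c2 c3 : ℝ) (g f0 f1 f2 : ℝ → ℝ) (dg d0 d1 d2 : ℝ) (t : ℝ)
    (hg : HasDerivAt g dg t) (h0 : HasDerivAt f0 d0 t) (h1 : HasDerivAt f1 d1 t)
    (h2 : HasDerivAt f2 d2 t) :
    HasDerivAt (fun s => g s * (c1 * f0 s ^ 2 + c2 * f1 s ^ 2 + c3 * f2 s ^ 2))
      (dg * (c1 * f0 t ^ 2 + c2 * f1 t ^ 2 + c3 * f2 t ^ 2)
        + g t * (c1 * (2 * f0 t * d0) + c2 * (2 * f1 t * d1) + c3 * (2 * f2 t * d2))) t := by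
  have : HasDerivAt (fun s => g s * (c1 * f0 s ^ 2 + c2 * f1 s ^ 2 + c3 * f2 s ^ 2)) _ t := hg.mul ((((h0.pow 2).const_mul c1).add ((h1.pow 2).const_mul c2)).add
    ((h2.pow 2).const_mul c3))
  convert this using 1
  ring

/-- If M(t) solves the Euler equations Ṁ = M × aM, then γ(t) := P⁽³⁾(M(t))
    solves the Poisson equations γ̇ = 3·γ × aM. -/
theorem P3_solves_Poisson (a1 a2 a3 : ℝ)
    (h12 : a1 ≠ a2) (h23 : a2 ≠ a3) (h31 : a3 ≠ a1)
    (M M' : ℝ → Fin 3 → ℝ)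
    (hM : ∀ t i, HasDerivAt (fun s => M s i) (M' t i) t)
    (heqM : ∀ t, M' t = cross3 (M t) (dmul3 ![a1, a2, a3] (M t))) :
    ∀ t i, HasDerivAt (fun s => P3vec a1 a2 a3 (M s) i)
      (3 * cross3 (P3vec a1 a2 a3 (M t)) (dmul3 ![a1, a2, a3] (M t)) i) t := by
  intro t i
  have h0 := hM t 0
  have h1 := hM t 1
  have h2 := hM t 2
  have e0 : M' t 0 = M t 1 * (a3 * M t 2) - M t 2 * (a2 * M t 1) := by
    rw [heqM t]; simp [cross3, dmul3]
  have e1 : M' t 1 = M t 2 * (a1 * M t 0) - M t 0 * (a3 * M t 2) := by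
    rw [heqM t]; simp [cross3, dmul3]
  have e2 : M' t 2 = M t 0 * (a2 * M t 1) - M t 1 * (a1 * M t 0) := by
    rw [heqM t]; simp [cross3, dmul3]
  fin_cases i <;>
  · simp only [P3vec, cross3, dmul3, Fin.isValue, Matrix.cons_val_zero, Matrix.cons_val_one,
      Matrix.head_cons, Matrix.cons_val_two, Matrix.tail_cons, Fin.mk_zero, Fin.mk_one, Fin.reduceFinMk]
    first
      | exact (hasDerivAt_cubic3 _ _ _ _ _ _ _ (M' t 0) (M' t 0) (M' t 1) (M' t 2) t
          h0 h0 h1 h2).congr_deriv (by simp only [e0, e1, e2, Matrix.cons_val_two, Matrix.tail_cons, Matrix.head_cons, Matrix.cons_val_zero, Matrix.cons_val_one, Fin.isValue]; ring)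
      | exact (hasDerivAt_cubic3 _ _ _ _ _ _ _ (M' t 1) (M' t 0) (M' t 1) (M' t 2) t
          h1 h0 h1 h2).congr_deriv (by simp only [e0, e1, e2, Matrix.cons_val_two, Matrix.tail_cons, Matrix.head_cons, Matrix.cons_val_zero, Matrix.cons_val_one, Fin.isValue]; ring)
      | exact (hasDerivAt_cubic3 _ _ _ _ _ _ _ (M' t 2) (M' t 0) (M' t 1) (M' t 2) t
          h2 h0 h1 h2).congr_deriv (by simp only [e0, e1, e2, Matrix.cons_val_two, Matrix.tail_cons, Matrix.head_cons, Matrix.cons_val_zero, Matrix.cons_val_one, Fin.isValue]; ring)
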